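/- Let d ≥ 2 and m ≥ 1 be natural numbers, let p = ⌈log_d(m+1)⌉, and let h ≥ p be a natural number. Then for every injective map ψ: {0, 1, …, m} → {1, …, d^h}, one has Σ_{i=1}^{m} δ_{d,h}(ψ(0), ψ(i)) ≥ 2·(p·(m+1) − (d^p − 1)/(d−1)), where (d^p − 1)/(d−1) is an exact integer division. -/

import Mathlib

/-- The canonical leaf distance on the complete `d`-regular tree of height `h`:
`δ_{d,h}(t,j) = 2·min{k ∈ {1,…,h} : ⌊(t−1)/d^k⌋ = ⌊(j−1)/d^k⌋}` for `t ≠ j`,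
and `δ_{d,h}(t,t) = 0`. -/
noncomputable def leafDist (d h t j : ℕ) : ℕ :=
  if t = j then 0
  else 2 * sInf {k : ℕ | 1 ≤ k ∧ k ≤ h ∧ (t - 1) / d ^ k = (j - 1) / d ^ k}

lemma div_pow_congr (d a b k k' : ℕ) (hk : k ≤ k') (h : a / d ^ k = b / d ^ k) :
    a / d ^ k' = b / d ^ k' := by
  obtain ⟨j, rfl⟩ := Nat.exists_eq_add_of_le hk
  rw [pow_add, ← Nat.div_div_eq_div_mul, ← Nat.div_div_eq_div_mul, h]

/-- for `d ≥ 2`, `m ≥ 1`, `p = ⌈log_d (m+1)⌉` (the least `p` with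
`m+1 ≤ d^p`) and any `h ≥ p`, every injective map `ψ : {0,…,m} → {1,…,d^h}`
satisfies `Σ_{i=1}^{m} δ_{d,h}(ψ(0), ψ(i)) ≥ 2·(p·(m+1) − (d^p − 1)/(d−1))`. -/
theorem star_local_lower_bound (d m p h : ℕ) (hd : 2 ≤ d) (hm : 1 ≤ m)
    (hp : IsLeast {k : ℕ | m + 1 ≤ d ^ k} p) (hph : p ≤ h)
    (ψ : ℕ → ℕ) (hinj : Set.InjOn ψ (Set.Iic m))
    (hrange : ∀ i ≤ m, 1 ≤ ψ i ∧ ψ i ≤ d ^ h) :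
    2 * (p * (m + 1) - (d ^ p - 1) / (d - 1))
      ≤ ∑ i ∈ Finset.Icc 1 m, leafDist d h (ψ 0) (ψ i) := by
  obtain ⟨hpmem, hpmin⟩ := hp
  have hp1 : 1 ≤ p := by
    by_contra hcon
    interval_cases p
    simp at hpmem; omega
  have hh1 : 1 ≤ h := le_trans hp1 hph
  -- the level function
  set K : ℕ → ℕ := fun i =>
    sInf {k : ℕ | 1 ≤ k ∧ k ≤ h ∧ (ψ 0 - 1) / d ^ k = (ψ i - 1) / d ^ k} with hK
  have hne : ∀ i ∈ Finset.Icc 1 m, ψ 0 ≠ ψ i := by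
    intro i hi heq
    simp only [Finset.mem_Icc] at hi
    have := hinj (Set.mem_Iic.2 (Nat.zero_le m)) (Set.mem_Iic.2 hi.2) heq
    omega
  have hKmem : ∀ i ∈ Finset.Icc 1 m,
      1 ≤ K i ∧ K i ≤ h ∧ (ψ 0 - 1) / d ^ (K i) = (ψ i - 1) / d ^ (K i) := by
    intro i hi
    simp only [Finset.mem_Icc] at hi
    have h0 := hrange 0 (Nat.zero_le m)
    have hi' := hrange i hi.2
    have hnonempty : h ∈ {k : ℕ | 1 ≤ k ∧ k ≤ h ∧
        (ψ 0 - 1) / d ^ k = (ψ i - 1) / d ^ k} := by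
      refine ⟨hh1, le_refl h, ?_⟩
      rw [Nat.div_eq_of_lt (by omega), Nat.div_eq_of_lt (by omega)]
    exact Nat.sInf_mem ⟨h, hnonempty⟩
  have hdist : ∀ i ∈ Finset.Icc 1 m, leafDist d h (ψ 0) (ψ i) = 2 * K i := by
    intro i hi
    rw [leafDist, if_neg (hne i hi)]
  rw [Finset.sum_congr rfl hdist, ← Finset.mul_sum]
  have key : p * (m + 1) - (d ^ p - 1) / (d - 1) ≤ ∑ i ∈ Finset.Icc 1 m, K i := by
    -- count levels
    have step1 : ∀ i ∈ Finset.Icc 1 m,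
        ((Finset.Icc 1 p).filter (fun k => k ≤ K i)).card ≤ K i := by
      intro i hi
      calc ((Finset.Icc 1 p).filter (fun k => k ≤ K i)).card
          ≤ (Finset.Icc 1 (K i)).card := by
            apply Finset.card_le_card
            intro k hk
            simp only [Finset.mem_filter, Finset.mem_Icc] at *
            omega
        _ = K i := by rw [Nat.card_Icc]; omega
    have swap : ∑ i ∈ Finset.Icc 1 m, ((Finset.Icc 1 p).filter (fun k => k ≤ K i)).card
        = ∑ k ∈ Finset.Icc 1 p, ((Finset.Icc 1 m).filter (fun i => k ≤ K i)).card := by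
      simp only [Finset.card_filter]
      rw [Finset.sum_comm]
    -- per-level bound
    have level : ∀ k ∈ Finset.Icc 1 p,
        m + 1 - d ^ (k - 1) ≤ ((Finset.Icc 1 m).filter (fun i => k ≤ K i)).card := by
      intro k hk
      simp only [Finset.mem_Icc] at hk
      set T := (Finset.Icc 1 m).filter
        (fun i => (ψ 0 - 1) / d ^ (k - 1) = (ψ i - 1) / d ^ (k - 1)) with hT
      have hTcard : T.card ≤ d ^ (k - 1) - 1 := by
        have r0 := (ψ 0 - 1) % d ^ (k - 1)
        have hinjT : Set.InjOn (fun i => (ψ i - 1) % d ^ (k - 1)) ↑T := by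
          intro a ha b hb hab
          simp only [hT, Finset.coe_filter, Set.mem_setOf_eq, Finset.mem_Icc] at ha hb
          simp only at hab
          have hqa : (ψ a - 1) / d ^ (k - 1) = (ψ b - 1) / d ^ (k - 1) :=
            ha.2 ▸ hb.2 ▸ rfl
          have ha1 := (hrange a ha.1.2).1
          have hb1 := (hrange b hb.1.2).1
          have : ψ a - 1 = ψ b - 1 := by
            rw [← Nat.div_add_mod (ψ a - 1) (d ^ (k - 1)),
              ← Nat.div_add_mod (ψ b - 1) (d ^ (k - 1)), hqa, hab]
          have : ψ a = ψ b := by omega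
          exact hinj (Set.mem_Iic.2 ha.1.2) (Set.mem_Iic.2 hb.1.2) this
        have hmaps : ∀ i ∈ T, (ψ i - 1) % d ^ (k - 1)
            ∈ (Finset.range (d ^ (k - 1))).erase ((ψ 0 - 1) % d ^ (k - 1)) := by
          intro i hi
          simp only [hT, Finset.mem_filter, Finset.mem_Icc] at hi
          have hdk : 0 < d ^ (k - 1) := Nat.pow_pos (by omega)
          refine Finset.mem_erase.2 ⟨?_, Finset.mem_range.2 (Nat.mod_lt _ hdk)⟩
          intro hmod
          have h01 := (hrange 0 (Nat.zero_le m)).1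
          have hi1 := (hrange i hi.1.2).1
          have : ψ i - 1 = ψ 0 - 1 := by
            rw [← Nat.div_add_mod (ψ i - 1) (d ^ (k - 1)),
              ← Nat.div_add_mod (ψ 0 - 1) (d ^ (k - 1)), hi.2, hmod]
          have : ψ 0 = ψ i := by omega
          exact hne i (Finset.mem_Icc.2 hi.1) this
        calc T.card ≤ ((Finset.range (d ^ (k - 1))).erase ((ψ 0 - 1) % d ^ (k - 1))).card :=
              Finset.card_le_card_of_injOn _ hmaps hinjT
          _ = d ^ (k - 1) - 1 := by
              rw [Finset.card_erase_of_mem, Finset.card_range]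
              exact Finset.mem_range.2 (Nat.mod_lt _ (Nat.pow_pos (by omega)))
      -- complement is inside T
      have hsub : (Finset.Icc 1 m).filter (fun i => ¬ k ≤ K i) ⊆ T := by
        intro i hi
        simp only [Finset.mem_filter, not_le] at hi
        have hKm := hKmem i hi.1
        refine Finset.mem_filter.2 ⟨hi.1, ?_⟩
        exact div_pow_congr d _ _ (K i) (k - 1) (by omega) hKm.2.2
      have hcompl : ((Finset.Icc 1 m).filter (fun i => k ≤ K i)).card
          + ((Finset.Icc 1 m).filter (fun i => ¬ k ≤ K i)).card = m := by
        rw [Finset.card_filter_add_card_filter_not, Nat.card_Icc]; omega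
      have := Finset.card_le_card hsub
      have hdk1 : 1 ≤ d ^ (k - 1) := Nat.one_le_pow _ _ (by omega)
      omega
    -- geometric part
    have hgeom : ∑ k ∈ Finset.Icc 1 p, (m + 1 - d ^ (k - 1))
        = p * (m + 1) - (d ^ p - 1) / (d - 1) := by
      have hre : ∑ k ∈ Finset.Icc 1 p, (m + 1 - d ^ (k - 1))
          = ∑ j ∈ Finset.range p, (m + 1 - d ^ j) := by
        rw [← Finset.Ico_add_one_right_eq_Icc]
        rw [Finset.sum_Ico_eq_sum_range]
        simp
      have hle : ∀ j ∈ Finset.range p, d ^ j ≤ m + 1 := by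
        intro j hj
        simp only [Finset.mem_range] at hj
        by_contra hcon
        have : m + 1 ≤ d ^ j := by omega
        exact absurd (hpmin this) (by omega)
      rw [hre, Finset.sum_tsub_distrib _ hle, Finset.sum_const, Finset.card_range,
        smul_eq_mul, Nat.geomSum_eq hd]
    calc p * (m + 1) - (d ^ p - 1) / (d - 1)
        = ∑ k ∈ Finset.Icc 1 p, (m + 1 - d ^ (k - 1)) := hgeom.symm
      _ ≤ ∑ k ∈ Finset.Icc 1 p, ((Finset.Icc 1 m).filter (fun i => k ≤ K i)).card :=
          Finset.sum_le_sum level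
      _ = ∑ i ∈ Finset.Icc 1 m, ((Finset.Icc 1 p).filter (fun k => k ≤ K i)).card :=
          swap.symm
      _ ≤ ∑ i ∈ Finset.Icc 1 m, K i := Finset.sum_le_sum step1
  exact Nat.mul_le_mul_left 2 key
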